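/- arXiv:2112.11744 — 3 statements merged into one kernel-verified Lean document; each statement's English description precedes it below -/
import Mathlib

section
/- Let G be a topologically simple topological group, φ : G → H a continuous homomorphism to a topological group H, and (aᵢ) a sequence in G whose contraction group con((aᵢ)) := {x ∈ G : aᵢ x aᵢ⁻¹ → 1} is nontrivial. If the sequence (φ(aᵢ)) converges in H and H is Hausdorff, then φ is the trivial homomorphism. -/
open Filter

theorem stmt6 {G H : Type*} [Group G] [TopologicalSpace G] [IsTopologicalGroup G]
    [Group H] [TopologicalSpace H] [IsTopologicalGroup H] [T2Space H]
    (hsimple : ∀ N : Subgroup G, N.Normal → IsClosed (N : Set G) → N = ⊥ ∨ N = ⊤)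
    (φ : G →* H) (hφ : Continuous φ)
    (a : ℕ → G) (x : G) (hx : x ≠ 1)
    (hcon : Tendsto (fun i => a i * x * (a i)⁻¹) atTop (nhds 1))
    (h : H) (hconv : Tendsto (fun i => φ (a i)) atTop (nhds h)) :
    ∀ g : G, φ g = 1 := by
  have hker : IsClosed (φ.ker : Set G) := by
    have : (φ.ker : Set G) = φ ⁻¹' {1} := rfl
    rw [this]
    exact isClosed_singleton.preimage hφ
  have h1 : Tendsto (fun i => φ (a i * x * (a i)⁻¹)) atTop (nhds 1) := by
    simpa only [Function.comp_def, map_one] using (hφ.tendsto 1).comp hcon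
  have h2 : Tendsto (fun i => φ (a i * x * (a i)⁻¹)) atTop (nhds (h * φ x * h⁻¹)) := by
    simp only [map_mul, map_inv]
    exact (hconv.mul tendsto_const_nhds).mul hconv.inv
  have hx1 : φ x = 1 := by
    have heq : h * φ x * h⁻¹ = 1 := (tendsto_nhds_unique h1 h2).symm
    calc φ x = h⁻¹ * (h * φ x * h⁻¹) * h := by group
    _ = 1 := by rw [heq]; group
  rcases hsimple φ.ker inferInstance hker with hb | ht
  · exact absurd (hb ▸ hx1 : x ∈ (⊥ : Subgroup G)) (by simpa using hx)
  · intro g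
    have : g ∈ φ.ker := ht ▸ Subgroup.mem_top g
    exact this
end

section
/- In GL₂(ℚ_p), let hₙ := [[pⁿ, 0],[p^{⌈n/3⌉}, 1]]. If h = [[a,b],[c,d]] ∈ GL₂(ℚ_p) satisfies hₙ h hₙ⁻¹ → λₙ·I for some scalars λₙ (i.e., the image of hₙ h hₙ⁻¹ in PGL₂(ℚ_p) converges to the identity), then b = c = 0 and a = d, i.e., h is scalar. -/
open Filter

theorem stmt11 (p : ℕ) [Fact p.Prime] (M : Matrix (Fin 2) (Fin 2) ℚ_[p])
    (hM : IsUnit M.det)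
    (h : ℕ → Matrix (Fin 2) (Fin 2) ℚ_[p])
    (hdef : ∀ n, h n = !![(p : ℚ_[p]) ^ n, 0; (p : ℚ_[p]) ^ ((n + 2) / 3), 1])
    (lam : ℕ → ℚ_[p])
    (hconv : Tendsto
      (fun n => h n * M * (h n)⁻¹ - lam n • (1 : Matrix (Fin 2) (Fin 2) ℚ_[p]))
      atTop (nhds 0)) :
    M 0 1 = 0 ∧ M 1 0 = 0 ∧ M 0 0 = M 1 1 := by
  have hprime : p.Prime := Fact.out
  have hp : (p : ℚ_[p]) ≠ 0 := Nat.cast_ne_zero.2 hprime.ne_zero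
  set a := M 0 0 with ha
  set b := M 0 1 with hb
  set c := M 1 0 with hc
  set d := M 1 1 with hd
  set q : ℚ_[p] := ((p : ℚ_[p]))⁻¹ with hq
  set k : ℕ → ℕ := fun n => (n + 2) / 3 with hk
  have hdef' : ∀ n, h n = !![(p : ℚ_[p]) ^ n, 0; (p : ℚ_[p]) ^ (k n), 1] := hdef
  clear hdef
  -- inverse formula
  have hinv : ∀ n, (h n)⁻¹ = !![q ^ n, 0; -((p : ℚ_[p]) ^ (k n) * q ^ n), 1] := by
    intro n
    apply Matrix.inv_eq_right_inv
    have hqn : (p : ℚ_[p]) ^ n * q ^ n = 1 := by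
      rw [hq, ← mul_pow, mul_inv_cancel₀ hp, one_pow]
    rw [hdef', Matrix.mul_fin_two, Matrix.one_fin_two]
    ext i j
    fin_cases i <;> fin_cases j <;>
      simp only [Fin.mk_zero, Fin.mk_one, Fin.isValue, Matrix.of_apply, Matrix.cons_val',
        Matrix.cons_val_zero, Matrix.cons_val_one, Matrix.head_cons, Matrix.empty_val',
        Matrix.cons_val_fin_one, Matrix.head_fin_const]
    · linear_combination hqn
    · ring
    · linear_combination ((p : ℚ_[p]) ^ (k n)) * hqn - ((p : ℚ_[p]) ^ (k n)) * hqn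
    · ring
  -- entry formula for the conjugate
  have hE : ∀ n, h n * M * (h n)⁻¹ =
      !![a - b * (p : ℚ_[p]) ^ (k n), (p : ℚ_[p]) ^ n * b;
         q ^ n * ((p : ℚ_[p]) ^ (k n) * a + c - (p : ℚ_[p]) ^ (2 * k n) * b
            - (p : ℚ_[p]) ^ (k n) * d),
         (p : ℚ_[p]) ^ (k n) * b + d] := by
    intro n
    have hqn : (p : ℚ_[p]) ^ n * q ^ n = 1 := by
      rw [hq, ← mul_pow, mul_inv_cancel₀ hp, one_pow]
    rw [hinv, hdef', Matrix.eta_fin_two M, ← ha, ← hb, ← hc, ← hd,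
      Matrix.mul_fin_two, Matrix.mul_fin_two]
    ext i j
    fin_cases i <;> fin_cases j <;>
      simp only [Fin.mk_zero, Fin.mk_one, Fin.isValue, Matrix.of_apply, Matrix.cons_val',
        Matrix.cons_val_zero, Matrix.cons_val_one, Matrix.head_cons, Matrix.empty_val',
        Matrix.cons_val_fin_one, Matrix.head_fin_const]
    · linear_combination (a - b * (p : ℚ_[p]) ^ (k n)) * hqn
    · ring
    · ring
    · ring
  -- entrywise convergence
  have key : ∀ i j, Tendsto
      (fun n => (h n * M * (h n)⁻¹) i j - lam n * (1 : Matrix (Fin 2) (Fin 2) ℚ_[p]) i j)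
      atTop (nhds 0) := by
    intro i j
    have hcont : Continuous fun A : Matrix (Fin 2) (Fin 2) ℚ_[p] => A i j :=
      (continuous_apply j).comp (continuous_apply i)
    have := (hcont.tendsto 0).comp hconv
    simpa [Function.comp_def, Matrix.sub_apply, Matrix.smul_apply, smul_eq_mul] using this
  -- p^(k n) → 0
  have hkt : Tendsto k atTop atTop := by
    apply tendsto_atTop_atTop.2
    intro B
    exact ⟨3 * B, fun n hn => by simp only [hk]; omega⟩
  have hplt : ‖(p : ℚ_[p])‖ < 1 := Padic.norm_p_lt_one
  have hpk : Tendsto (fun n => (p : ℚ_[p]) ^ (k n)) atTop (nhds 0) :=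
    (tendsto_pow_atTop_nhds_zero_of_norm_lt_one hplt).comp hkt
  have hpk2 : Tendsto (fun n => (p : ℚ_[p]) ^ (2 * k n)) atTop (nhds 0) := by
    have h2 : Tendsto (fun n => 2 * k n) atTop atTop := by
      apply tendsto_atTop_atTop.2
      intro B
      exact ⟨3 * B, fun n hn => by simp only [hk]; omega⟩
    exact (tendsto_pow_atTop_nhds_zero_of_norm_lt_one hplt).comp h2
  -- diagonal entries
  have t00 : Tendsto (fun n => (a - b * (p : ℚ_[p]) ^ (k n)) - lam n) atTop (nhds 0) := by
    have e00 : ∀ n, (h n * M * (h n)⁻¹) 0 0 = a - b * (p : ℚ_[p]) ^ (k n) := by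
      intro n; rw [hE]; simp
    simpa [e00, Matrix.one_apply] using key 0 0
  have t11 : Tendsto (fun n => ((p : ℚ_[p]) ^ (k n) * b + d) - lam n) atTop (nhds 0) := by
    have e11 : ∀ n, (h n * M * (h n)⁻¹) 1 1 = (p : ℚ_[p]) ^ (k n) * b + d := by
      intro n; rw [hE]; simp
    simpa [e11, Matrix.one_apply] using key 1 1
  -- a = d
  have tad : Tendsto (fun _ : ℕ => a - d) atTop (nhds 0) := by
    have h2b : Tendsto (fun n => 2 * b * (p : ℚ_[p]) ^ (k n)) atTop (nhds 0) := by
      simpa using hpk.const_mul (2 * b)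
    have h3 := (t00.sub t11).add h2b
    simp only [sub_zero, zero_add, add_zero, zero_sub, neg_zero] at h3
    convert h3 using 2 with n
    ring
  have had : a = d := sub_eq_zero.1 (tendsto_nhds_unique tendsto_const_nhds tad)
  -- norm facts
  have hqnorm : ‖q‖ = (p : ℝ) := by
    rw [hq, norm_inv, Padic.norm_p, inv_inv]
  have hone_le_q : (1 : ℝ) ≤ ‖q‖ := by
    rw [hqnorm]; exact_mod_cast hprime.one_lt.le
  -- entry (1,0)
  have t10 : Tendsto (fun n => q ^ n * (c - (p : ℚ_[p]) ^ (2 * k n) * b)) atTop (nhds 0) := by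
    have e10 : ∀ n, (h n * M * (h n)⁻¹) 1 0
        = q ^ n * (c - (p : ℚ_[p]) ^ (2 * k n) * b) := by
      intro n; rw [hE]
      simp only [Fin.isValue, Matrix.of_apply, Matrix.cons_val', Matrix.cons_val_zero,
        Matrix.cons_val_one, Matrix.head_cons, Matrix.empty_val',
        Matrix.cons_val_fin_one, Matrix.head_fin_const]
      rw [had]; ring
    have h4 := key 1 0
    simp only [e10, Matrix.one_apply, if_neg (by decide : ¬(1 : Fin 2) = 0),
      mul_zero, sub_zero] at h4
    exact h4
  -- c = 0
  have hgc : Tendsto (fun n => c - (p : ℚ_[p]) ^ (2 * k n) * b) atTop (nhds 0) := by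
    refine squeeze_zero_norm (fun n => ?_) (by simpa using t10.norm)
    exact le_mul_of_one_le_left (norm_nonneg _) (one_le_pow₀ hone_le_q)
  have hc0 : c = 0 := by
    have h5 := (tendsto_const_nhds (x := c)).sub (hpk2.mul_const b)
    have h6 := tendsto_nhds_unique h5 hgc
    simpa using h6
  -- b = 0
  have tb : Tendsto (fun n => q ^ n * ((p : ℚ_[p]) ^ (2 * k n) * b)) atTop (nhds 0) := by
    have h7 := t10.neg
    simp only [hc0, zero_sub, mul_neg, neg_neg, neg_zero] at h7
    exact h7
  have hb0 : b = 0 := by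
    have hbound : ∀ᶠ n in atTop, ‖b‖ ≤ ‖q ^ n * ((p : ℚ_[p]) ^ (2 * k n) * b)‖ := by
      filter_upwards [eventually_ge_atTop 4] with n hn
      have hkn : 2 * k n ≤ n := by simp only [hk]; omega
      have hcollapse : q ^ n * (p : ℚ_[p]) ^ (2 * k n) = q ^ (n - 2 * k n) := by
        have hpq : q * (p : ℚ_[p]) = 1 := inv_mul_cancel₀ hp
        calc q ^ n * (p : ℚ_[p]) ^ (2 * k n)
            = q ^ (n - 2 * k n) * (q * (p : ℚ_[p])) ^ (2 * k n) := by
              rw [mul_pow, ← mul_assoc, ← pow_add, Nat.sub_add_cancel hkn]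
          _ = q ^ (n - 2 * k n) := by rw [hpq, one_pow, mul_one]
      rw [← mul_assoc, hcollapse, norm_mul, norm_pow]
      exact le_mul_of_one_le_left (norm_nonneg _) (one_le_pow₀ hone_le_q)
    have hnorm0 : Tendsto (fun n => ‖q ^ n * ((p : ℚ_[p]) ^ (2 * k n) * b)‖) atTop (nhds 0) := by
      simpa using tb.norm
    have h8 : ‖b‖ ≤ 0 := ge_of_tendsto hnorm0 hbound
    exact norm_le_zero_iff.1 h8
  exact ⟨hb0, hc0, had⟩
end

section
/- Let G be a topological group and suppose G = ⋃_{a ∈ A} K a K where K is a subgroup that is sequentially compact and A ⊆ G. Suppose G is topologically simple and: every sequence (aᵢ) in A either has a constant subsequence or has a subsequence with nontrivial contraction group. Then for every continuous homomorphism φ : G → H into a Hausdorff topological group H, the image φ(G) is sequentially closed in H. -/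
open Filter

theorem stmt16 {G : Type u} [Group G] [TopologicalSpace G] [IsTopologicalGroup G]
    (K : Subgroup G) (hK : IsSeqCompact (K : Set G)) (A : Set G)
    (hdec : ∀ g : G, ∃ k ∈ K, ∃ a ∈ A, ∃ k' ∈ K, g = k * a * k')
    (hsimple : ∀ N : Subgroup G, N.Normal → IsClosed (N : Set G) → N = ⊥ ∨ N = ⊤)
    (hseq : ∀ a : ℕ → G, (∀ i, a i ∈ A) →
      (∃ ψ : ℕ → ℕ, StrictMono ψ ∧ ∃ c : G, ∀ j, a (ψ j) = c) ∨
      (∃ ψ : ℕ → ℕ, StrictMono ψ ∧ ∃ x : G, x ≠ 1 ∧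
        Tendsto (fun j => a (ψ j) * x * (a (ψ j))⁻¹) atTop (nhds 1))) :
    ∀ (H : Type v) [Group H] [TopologicalSpace H] [IsTopologicalGroup H] [T2Space H]
      (φ : G →* H), Continuous φ →
      ∀ h : H, (∃ u : ℕ → G, Tendsto (fun i => φ (u i)) atTop (nhds h)) →
        h ∈ Set.range φ := by
  intro H _ _ _ _ φ hφ h hex
  obtain ⟨u, hu⟩ := hex
  have hker_closed : IsClosed ((φ.ker : Subgroup G) : Set G) := by
    have h1 : ((φ.ker : Subgroup G) : Set G) = φ ⁻¹' {1} := rfl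
    rw [h1]
    exact isClosed_singleton.preimage hφ
  rcases hsimple φ.ker φ.normal_ker hker_closed with hbot | htop
  · -- φ injective
    have hinj : Function.Injective φ := (MonoidHom.ker_eq_bot_iff φ).mp hbot
    choose k hk a ha k' hk' heq using fun i => hdec (u i)
    obtain ⟨k₀, hk₀, ψ₁, hψ₁, hlim₁⟩ := hK hk
    obtain ⟨k₀', hk₀', ψ₂, hψ₂, hlim₂⟩ := hK (x := fun i => k' (ψ₁ i)) (fun i => hk' (ψ₁ i))
    set θ : ℕ → ℕ := ψ₁ ∘ ψ₂ with hθ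
    have hθmono : StrictMono θ := hψ₁.comp hψ₂
    have hlimk : Tendsto (fun j => k (θ j)) atTop (nhds k₀) :=
      hlim₁.comp hψ₂.tendsto_atTop
    have hlimk' : Tendsto (fun j => k' (θ j)) atTop (nhds k₀') := hlim₂
    have hlimu : Tendsto (fun j => φ (u (θ j))) atTop (nhds h) :=
      hu.comp hθmono.tendsto_atTop
    set h' : H := (φ k₀)⁻¹ * h * (φ k₀')⁻¹ with hh'
    have hlima : Tendsto (fun j => φ (a (θ j))) atTop (nhds h') := by
      have h1 : ∀ j, φ (a (θ j)) = (φ (k (θ j)))⁻¹ * φ (u (θ j)) * (φ (k' (θ j)))⁻¹ := by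
        intro j
        rw [heq (θ j), map_mul, map_mul]
        group
      simp only [h1]
      exact ((((hφ.tendsto _).comp hlimk).inv.mul hlimu).mul
        ((hφ.tendsto _).comp hlimk').inv)
    rcases hseq (fun j => a (θ j)) (fun j => ha (θ j)) with
      ⟨ψ₃, hψ₃, c, hc⟩ | ⟨ψ₃, hψ₃, x, hx, hxlim⟩
    · have hsub : Tendsto (fun j => φ (a (θ (ψ₃ j)))) atTop (nhds h') :=
        hlima.comp hψ₃.tendsto_atTop
      have hcc : (fun j => φ (a (θ (ψ₃ j)))) = fun _ => φ c :=
        funext fun j => by rw [hc j]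
      rw [hcc] at hsub
      have hφc : φ c = h' := tendsto_nhds_unique tendsto_const_nhds hsub
      refine ⟨k₀ * c * k₀', ?_⟩
      rw [map_mul, map_mul, hφc, hh']
      group
    · exfalso
      have h1 : Tendsto (fun j => φ (a (θ (ψ₃ j))) * φ x * (φ (a (θ (ψ₃ j))))⁻¹)
          atTop (nhds (h' * φ x * h'⁻¹)) :=
        (((hlima.comp hψ₃.tendsto_atTop).mul tendsto_const_nhds).mul
          (hlima.comp hψ₃.tendsto_atTop).inv)
      have h2 : Tendsto (fun j => φ (a (θ (ψ₃ j))) * φ x * (φ (a (θ (ψ₃ j))))⁻¹)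
          atTop (nhds 1) := by
        have h5 := (hφ.tendsto 1).comp hxlim
        simp only [Function.comp_def, map_mul, map_inv, map_one] at h5
        exact h5
      have h3 : h' * φ x * h'⁻¹ = 1 := tendsto_nhds_unique h1 h2
      have h4 : φ x = 1 := by
        have h5 := congrArg (fun y => h'⁻¹ * y * h') h3
        simpa [mul_assoc] using h5
      exact hx (hinj (by rw [h4, map_one]))
  · -- φ trivial
    have hall : ∀ g : G, φ g = 1 := fun g =>
      MonoidHom.mem_ker.mp (htop ▸ Subgroup.mem_top g)
    have hconst : Tendsto (fun _ : ℕ => (1 : H)) atTop (nhds h) := by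
      simpa [hall] using hu
    exact ⟨1, by rw [map_one]; exact (tendsto_nhds_unique hconst tendsto_const_nhds).symm⟩
end
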